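/- Fix an integer ℓ ≥ 0. Let G be a finite simple graph, S ⊆ V(G) with |S| ≥ 2, f : S → ℕ with f(s) ≥ 1 for all s ∈ S, and A ⊆ S with |A| = 2 such that every vertex of A is adjacent in G to two leaves (degree-1 vertices) of G, neither of which lies in S. Let G' be obtained by affixing the spoon gadget Sp(ℓ,2) to G at A, and let v denote the path head of the gadget. Then, for the fragile power domination process on G' with multiset placement M(S,f), Pr_q(v is observed) = 1 − q^{f(A)}, where f(A) = Σ_{w∈A} f(w); moreover for every vertex v' of the appended path on ℓ vertices, Pr_q(v' is observed) = Pr_q(v is observed). -/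

import Mathlib

open Polynomial

/-- The closed neighborhood `N[S]` of a set of vertices. -/
def closedNbhd {V : Type*} (G : SimpleGraph V) (S : Set V) : Set V :=
  ⋃ v ∈ S, insert v (G.neighborSet v)

/-- A set `B` is closed under the zero forcing step: whenever `x ∈ B` has exactly one
neighbor `y` outside `B`, then `y` is already in `B`. -/
def PDClosed {V : Type*} (G : SimpleGraph V) (B : Set V) : Prop :=
  ∀ x ∈ B, ∀ y : V, G.neighborSet x \ B = {y} → y ∈ B

/-- `Obs G S` is the set of observed vertices of the power domination process started with
PMU placement `S`: the least superset of `N[S]` closed under the zero forcing step. -/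
def Obs {V : Type*} (G : SimpleGraph V) (S : Set V) : Set V :=
  ⋂₀ {B : Set V | closedNbhd G S ⊆ B ∧ PDClosed G B}

/-- The probability (as a polynomial in the failure probability `q`) that the vertex `u`
is observed under the multiset placement `M(S,f)`:
`Pr_q(u) = Σ_{T ⊆ S, u ∈ Obs(G;T)} q^{f(S∖T)} Π_{s∈T}(1 − q^{f(s)})`.
(For `T ⊆ S` we have `f(S∖T) = f(S) − f(T)`.) -/
noncomputable def prObs {V : Type*} (G : SimpleGraph V) (S : Finset V) (f : V → ℕ)
    (u : V) : Polynomial ℝ :=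
  ∑ T ∈ S.powerset,
    Set.indicator (Obs G ↑T)
      (fun _ => X ^ ((∑ v ∈ S, f v) - ∑ v ∈ T, f v) * ∏ v ∈ T, (1 - X ^ f v)) u

/-- The vertices of the graph obtained by affixing the spoon gadget `Sp(ℓ,2)` to a graph on
`V`: the original vertices, the degree-3 cycle vertex `conn` (which carries the leaf), the
cycle vertex `opp` opposite to it, the path head (the added leaf), and the `ℓ` vertices of
the appended path. -/
inductive Spoon2Vert (V : Type) (ℓ : ℕ) : Type
  | orig : V → Spoon2Vert V ℓ
  | conn : Spoon2Vert V ℓ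
  | opp : Spoon2Vert V ℓ
  | head : Spoon2Vert V ℓ
  | path : Fin ℓ → Spoon2Vert V ℓ

/-- The adjacency generating relation of the `Sp(ℓ,2)`-extension: original edges of `G`;
the 4-cycle `e 0 – conn – e 1 – opp – e 0`; the leaf `head` at `conn`; and the appended
path on `ℓ` vertices attached at `head`. -/
def spoon2Rel {V : Type} (G : SimpleGraph V) (ℓ : ℕ) (e : Fin 2 → V) :
    Spoon2Vert V ℓ → Spoon2Vert V ℓ → Prop
  | Spoon2Vert.orig u, Spoon2Vert.orig v => G.Adj u v
  | Spoon2Vert.orig u, Spoon2Vert.conn => u = e 0 ∨ u = e 1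
  | Spoon2Vert.orig u, Spoon2Vert.opp => u = e 0 ∨ u = e 1
  | Spoon2Vert.conn, Spoon2Vert.head => True
  | Spoon2Vert.head, Spoon2Vert.path j => (j : ℕ) = 0
  | Spoon2Vert.path j, Spoon2Vert.path j' => (j' : ℕ) = (j : ℕ) + 1
  | _, _ => False

/-- The graph obtained from `G` by affixing the spoon gadget `Sp(ℓ,2)` at `e 0, e 1`. -/
def spoon2Graph {V : Type} (G : SimpleGraph V) (ℓ : ℕ) (e : Fin 2 → V) :
    SimpleGraph (Spoon2Vert V ℓ) :=
  SimpleGraph.fromRel (spoon2Rel G ℓ e)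

/-- Embedding of the original vertex set into the extended one. -/
def origEmb (V : Type) (ℓ : ℕ) : V ↪ Spoon2Vert V ℓ :=
  ⟨Spoon2Vert.orig, fun x y h => by injection h⟩

/-- Extension of a sensor multiplicity function to the extended vertex set (no sensors are
placed on gadget vertices, so the values there are irrelevant). -/
def liftF {V : Type} (ℓ : ℕ) (f : V → ℕ) : Spoon2Vert V ℓ → ℕ
  | Spoon2Vert.orig v => f v
  | _ => 1

namespace SpoonAux
open Spoon2Vert Finset

variable {V : Type} {ℓ : ℕ} (G : SimpleGraph V) (e : Fin 2 → V)

lemma adj_opp (y : Spoon2Vert V ℓ) :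
    (spoon2Graph G ℓ e).Adj .opp y ↔ y = .orig (e 0) ∨ y = .orig (e 1) := by
  cases y <;> simp [spoon2Graph, spoon2Rel, SimpleGraph.fromRel_adj] <;> aesop

lemma adj_conn (y : Spoon2Vert V ℓ) :
    (spoon2Graph G ℓ e).Adj .conn y ↔ y = .orig (e 0) ∨ y = .orig (e 1) ∨ y = .head := by
  cases y <;> simp [spoon2Graph, spoon2Rel, SimpleGraph.fromRel_adj] <;> aesop

lemma adj_head (y : Spoon2Vert V ℓ) :
    (spoon2Graph G ℓ e).Adj .head y ↔ y = .conn ∨ ∃ j : Fin ℓ, (j : ℕ) = 0 ∧ y = .path j := by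
  cases y <;> simp [spoon2Graph, spoon2Rel, SimpleGraph.fromRel_adj] <;> aesop

lemma adj_path (j : Fin ℓ) (y : Spoon2Vert V ℓ) :
    (spoon2Graph G ℓ e).Adj (.path j) y ↔
      ((j : ℕ) = 0 ∧ y = .head) ∨ (∃ j' : Fin ℓ, (j : ℕ) = (j' : ℕ) + 1 ∧ y = .path j')
        ∨ (∃ j' : Fin ℓ, (j' : ℕ) = (j : ℕ) + 1 ∧ y = .path j') := by
  cases y <;> simp [spoon2Graph, spoon2Rel, SimpleGraph.fromRel_adj] <;>
    constructor <;> rintro h <;> aesop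

lemma adj_orig (u : V) (y : Spoon2Vert V ℓ) :
    (spoon2Graph G ℓ e).Adj (.orig u) y ↔
      (∃ w, G.Adj u w ∧ y = .orig w) ∨ ((u = e 0 ∨ u = e 1) ∧ (y = .conn ∨ y = .opp)) := by
  cases y <;> simp [spoon2Graph, spoon2Rel, SimpleGraph.fromRel_adj, SimpleGraph.adj_comm] <;>
    aesop (add simp [SimpleGraph.adj_comm])

end SpoonAux

namespace SpoonAux
open Spoon2Vert Finset

variable {V : Type} {ℓ : ℕ} (G : SimpleGraph V) (e : Fin 2 ↪ V)

lemma mem_closedNbhd_self {W : Type} (H : SimpleGraph W) (S : Set W) {v : W} (hv : v ∈ S) :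
    v ∈ closedNbhd H S :=
  Set.mem_biUnion hv (Set.mem_insert _ _)

lemma mem_closedNbhd_adj {W : Type} (H : SimpleGraph W) (S : Set W) {v w : W} (hv : v ∈ S)
    (h : H.Adj v w) : w ∈ closedNbhd H S :=
  Set.mem_biUnion hv (Set.mem_insert_of_mem _ h)

lemma obs_of_mem (T : Finset V) (hT : e 0 ∈ T ∨ e 1 ∈ T) :
    Spoon2Vert.head ∈ Obs (spoon2Graph G ℓ ⇑e) ↑(T.map (origEmb V ℓ)) ∧
    ∀ j : Fin ℓ, Spoon2Vert.path j ∈ Obs (spoon2Graph G ℓ ⇑e) ↑(T.map (origEmb V ℓ)) := by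
  have key : ∀ B : Set (Spoon2Vert V ℓ),
      closedNbhd (spoon2Graph G ℓ ⇑e) ↑(T.map (origEmb V ℓ)) ⊆ B →
      PDClosed (spoon2Graph G ℓ ⇑e) B →
      Spoon2Vert.head ∈ B ∧ ∀ j : Fin ℓ, Spoon2Vert.path j ∈ B := by
    intro B hB1 hB2
    -- pick i with e i ∈ T
    obtain ⟨i, hi⟩ : ∃ i : Fin 2, e i ∈ T := by
      rcases hT with h | h
      exacts [⟨0, h⟩, ⟨1, h⟩]
    have hmemT' : (Spoon2Vert.orig (e i) : Spoon2Vert V ℓ) ∈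
        (↑(T.map (origEmb V ℓ)) : Set (Spoon2Vert V ℓ)) :=
      Finset.mem_coe.mpr (Finset.mem_map_of_mem _ hi)
    have hei : e i = e 0 ∨ e i = e 1 := by fin_cases i <;> simp
    have horig : (Spoon2Vert.orig (e i) : Spoon2Vert V ℓ) ∈ B :=
      hB1 (mem_closedNbhd_self _ _ hmemT')
    have hopp : (Spoon2Vert.opp : Spoon2Vert V ℓ) ∈ B := by
      refine hB1 (mem_closedNbhd_adj _ _ hmemT' ?_)
      rw [adj_orig]
      exact Or.inr ⟨hei, Or.inr rfl⟩
    have hconn : (Spoon2Vert.conn : Spoon2Vert V ℓ) ∈ B := by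
      refine hB1 (mem_closedNbhd_adj _ _ hmemT' ?_)
      rw [adj_orig]
      exact Or.inr ⟨hei, Or.inl rfl⟩
    have hboth : ∀ k : Fin 2, (Spoon2Vert.orig (e k) : Spoon2Vert V ℓ) ∈ B := by
      intro k
      by_cases hk : (Spoon2Vert.orig (e k) : Spoon2Vert V ℓ) ∈ B
      · exact hk
      · have hki : k ≠ i := by rintro rfl; exact hk horig
        refine hB2 _ hopp _ ?_
        ext z
        simp only [Set.mem_diff, SimpleGraph.mem_neighborSet, adj_opp, Set.mem_singleton_iff]
        constructor
        · rintro ⟨hz1, hz2⟩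
          rcases hz1 with rfl | rfl <;>
          · -- z = orig (e 0) or orig (e 1); it is not the e i one since that is in B
            congr 1
            fin_cases i <;> fin_cases k <;> simp_all
        · rintro rfl
          refine ⟨?_, hk⟩
          fin_cases k <;> simp [adj_opp]
    have hhead : (Spoon2Vert.head : Spoon2Vert V ℓ) ∈ B := by
      by_cases hh : (Spoon2Vert.head : Spoon2Vert V ℓ) ∈ B
      · exact hh
      · refine hB2 _ hconn _ ?_
        ext z
        simp only [Set.mem_diff, SimpleGraph.mem_neighborSet, adj_conn, Set.mem_singleton_iff]
        constructor
        · rintro ⟨hz1, hz2⟩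
          rcases hz1 with rfl | rfl | rfl
          · exact absurd (hboth 0) hz2
          · exact absurd (hboth 1) hz2
          · rfl
        · rintro rfl
          exact ⟨Or.inr (Or.inr rfl), hh⟩
    have hpath : ∀ n : ℕ, ∀ j : Fin ℓ, (j : ℕ) = n → (Spoon2Vert.path j : Spoon2Vert V ℓ) ∈ B := by
      intro n
      induction n using Nat.strong_induction_on with
      | _ n IH =>
        intro j hj
        by_cases hjB : (Spoon2Vert.path j : Spoon2Vert V ℓ) ∈ B
        · exact hjB
        · rcases n with _ | m
          · -- j = 0, forced by head
            refine hB2 _ hhead _ ?_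
            ext z
            simp only [Set.mem_diff, SimpleGraph.mem_neighborSet, adj_head,
              Set.mem_singleton_iff]
            constructor
            · rintro ⟨hz1, hz2⟩
              rcases hz1 with rfl | ⟨j', hj', rfl⟩
              · exact absurd hconn hz2
              · congr 1
                exact Fin.ext (by omega)
            · rintro rfl
              exact ⟨Or.inr ⟨j, hj, rfl⟩, hjB⟩
          · -- j = m+1, forced by path ⟨m⟩
            have hmℓ : m < ℓ := by omega
            have hjm : (Spoon2Vert.path (⟨m, hmℓ⟩ : Fin ℓ) : Spoon2Vert V ℓ) ∈ B :=
              IH m (by omega) _ rfl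
            refine hB2 _ hjm _ ?_
            ext z
            simp only [Set.mem_diff, SimpleGraph.mem_neighborSet, adj_path,
              Set.mem_singleton_iff]
            constructor
            · rintro ⟨hz1, hz2⟩
              rcases hz1 with ⟨h0, rfl⟩ | ⟨j', hj', rfl⟩ | ⟨j', hj', rfl⟩
              · exact absurd hhead hz2
              · have hj'' : m = (j' : ℕ) + 1 := hj'
                exact absurd (IH (j' : ℕ) (by omega) j' rfl) hz2
              · have hj'' : (j' : ℕ) = m + 1 := hj'
                congr 1
                exact Fin.ext (by omega)
            · rintro rfl
              exact ⟨Or.inr (Or.inr ⟨j, hj, rfl⟩), hjB⟩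
    exact ⟨hhead, fun j => hpath (j : ℕ) j rfl⟩
  constructor
  · intro B hB
    exact (key B hB.1 hB.2).1
  · intro j B hB
    exact (key B hB.1 hB.2).2 j

lemma obs_of_not_mem (T : Finset V) (h0 : e 0 ∉ T) (h1 : e 1 ∉ T) :
    Spoon2Vert.head ∉ Obs (spoon2Graph G ℓ ⇑e) ↑(T.map (origEmb V ℓ)) ∧
    ∀ j : Fin ℓ, Spoon2Vert.path j ∉ Obs (spoon2Graph G ℓ ⇑e) ↑(T.map (origEmb V ℓ)) := by
  set B : Set (Spoon2Vert V ℓ) := Set.range Spoon2Vert.orig with hB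
  have hBmem : B ∈ {C : Set (Spoon2Vert V ℓ) |
      closedNbhd (spoon2Graph G ℓ ⇑e) ↑(T.map (origEmb V ℓ)) ⊆ C ∧
      PDClosed (spoon2Graph G ℓ ⇑e) C} := by
    constructor
    · -- closed neighborhood
      intro z hz
      rw [closedNbhd, Set.mem_iUnion₂] at hz
      obtain ⟨v, hv, hzv⟩ := hz
      obtain ⟨t, ht, rfl⟩ : ∃ t ∈ T, (origEmb V ℓ) t = v := by
        simpa using hv
      rcases hzv with rfl | hadj
      · exact ⟨t, rfl⟩
      · rw [SimpleGraph.mem_neighborSet, show ((origEmb V ℓ) t) = Spoon2Vert.orig t from rfl,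
          adj_orig] at hadj
        rcases hadj with ⟨w, _, rfl⟩ | ⟨ht', _⟩
        · exact ⟨w, rfl⟩
        · rcases ht' with rfl | rfl
          exacts [absurd ht h0, absurd ht h1]
    · -- PDClosed
      rintro x ⟨u, rfl⟩ y hy
      by_cases hu : u = e 0 ∨ u = e 1
      · -- both conn and opp are outside B and neighbors, contradiction
        exfalso
        have hconn : (Spoon2Vert.conn : Spoon2Vert V ℓ) ∈ (spoon2Graph G ℓ ⇑e).neighborSet (Spoon2Vert.orig u) \ B := by
          refine ⟨?_, by simp [hB]⟩
          rw [SimpleGraph.mem_neighborSet, adj_orig]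
          exact Or.inr ⟨hu, Or.inl rfl⟩
        have hopp : (Spoon2Vert.opp : Spoon2Vert V ℓ) ∈ (spoon2Graph G ℓ ⇑e).neighborSet (Spoon2Vert.orig u) \ B := by
          refine ⟨?_, by simp [hB]⟩
          rw [SimpleGraph.mem_neighborSet, adj_orig]
          exact Or.inr ⟨hu, Or.inr rfl⟩
        rw [hy] at hconn hopp
        simp only [Set.mem_singleton_iff] at hconn hopp
        rw [← hopp] at hconn
        exact nomatch hconn
      · exfalso
        have hymem : y ∈ (spoon2Graph G ℓ ⇑e).neighborSet (Spoon2Vert.orig u) \ B := by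
          rw [hy]; exact rfl
        obtain ⟨hadj, hyB⟩ := hymem
        rw [SimpleGraph.mem_neighborSet, adj_orig] at hadj
        rcases hadj with ⟨w, _, rfl⟩ | ⟨hu', _⟩
        · exact hyB ⟨w, rfl⟩
        · exact hu hu'
  constructor
  · intro h
    have := h B hBmem
    obtain ⟨u, hu⟩ := this
    exact nomatch hu
  · intro j h
    have := h B hBmem
    obtain ⟨u, hu⟩ := this
    exact nomatch hu

end SpoonAux



lemma my_powerset_map {α β : Type*} (f : α ↪ β) (s : Finset α) :
    (s.map f).powerset = s.powerset.map ⟨fun T => T.map f, Finset.map_injective f⟩ := by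
  classical
  ext T'
  simp only [Finset.mem_powerset, Finset.mem_map, Function.Embedding.coeFn_mk]
  constructor
  · intro hT'
    refine ⟨(s.filter (fun a => f a ∈ T')), Finset.filter_subset _ _, ?_⟩
    ext b
    simp only [Finset.mem_map, Finset.mem_filter]
    constructor
    · rintro ⟨a, ⟨_, hb⟩, rfl⟩; exact hb
    · intro hb
      obtain ⟨a, ha, rfl⟩ := Finset.mem_map.mp (hT' hb)
      exact ⟨a, ⟨ha, hb⟩, rfl⟩
  · rintro ⟨T, hT, rfl⟩
    exact Finset.map_subset_map.mpr hT

lemma sum_powerset_one {α : Type*} [DecidableEq α] (s : Finset α) (g : α → ℕ) :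
    ∑ T ∈ s.powerset, (X : ℝ[X]) ^ ((∑ v ∈ s, g v) - ∑ v ∈ T, g v) * ∏ v ∈ T, (1 - X ^ g v)
      = 1 := by
  have h := Finset.prod_add (fun v => (1 : ℝ[X]) - X ^ g v) (fun v => (X : ℝ[X]) ^ g v) s
  have hL : ∏ v ∈ s, ((1 : ℝ[X]) - X ^ g v + X ^ g v) = 1 := by
    rw [show (fun v => (1 : ℝ[X]) - X ^ g v + X ^ g v) = fun v => 1 from funext (fun v => by ring)]
    exact Finset.prod_const_one
  rw [hL] at h
  have h2 : ∑ T ∈ s.powerset,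
      (X : ℝ[X]) ^ ((∑ v ∈ s, g v) - ∑ v ∈ T, g v) * ∏ v ∈ T, (1 - X ^ g v)
      = ∑ t ∈ s.powerset, (∏ i ∈ t, ((1 : ℝ[X]) - X ^ g i)) * ∏ i ∈ s \ t, X ^ g i := by
    refine Finset.sum_congr rfl (fun T hT => ?_)
    have hsub := Finset.mem_powerset.mp hT
    have hsd : (∑ v ∈ s \ T, g v) = (∑ v ∈ s, g v) - ∑ v ∈ T, g v := by
      have := Finset.sum_sdiff (f := g) hsub
      omega
    rw [Finset.prod_pow_eq_pow_sum, hsd, mul_comm]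
  rw [h2]
  exact h.symm


theorem stmt13 {V : Type} [Fintype V] (ℓ : ℕ)
    (G : SimpleGraph V) (S : Finset V) (hS : 2 ≤ S.card)
    (f : V → ℕ) (hf : ∀ v ∈ S, 1 ≤ f v)
    (A : Finset V) (hAS : A ⊆ S) (hAcard : A.card = 2)
    (e : Fin 2 ↪ V) (he : Finset.univ.map e = A)
    (hleaves : ∀ v ∈ A, ∃ l₁ l₂ : V, l₁ ≠ l₂ ∧ l₁ ∉ S ∧ l₂ ∉ S ∧
        G.neighborSet l₁ = {v} ∧ G.neighborSet l₂ = {v}) :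
    prObs (spoon2Graph G ℓ ⇑e) (S.map (origEmb V ℓ)) (liftF ℓ f) Spoon2Vert.head
        = 1 - X ^ (∑ w ∈ A, f w) ∧
      ∀ j : Fin ℓ,
        prObs (spoon2Graph G ℓ ⇑e) (S.map (origEmb V ℓ)) (liftF ℓ f) (Spoon2Vert.path j)
          = prObs (spoon2Graph G ℓ ⇑e) (S.map (origEmb V ℓ)) (liftF ℓ f)
              Spoon2Vert.head :=  by
  classical
  have hA : ∀ t : V, t ∈ A ↔ t = e 0 ∨ t = e 1 := by
    intro t
    rw [← he]
    simp only [Finset.mem_map, Finset.mem_univ, true_and, Fin.exists_fin_two]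
    constructor
    · rintro (h | h)
      exacts [Or.inl h.symm, Or.inr h.symm]
    · rintro (rfl | rfl)
      exacts [Or.inl rfl, Or.inr rfl]
  have hsum : ∀ u : Spoon2Vert V ℓ,
      (u = Spoon2Vert.head ∨ ∃ j : Fin ℓ, u = Spoon2Vert.path j) →
      prObs (spoon2Graph G ℓ ⇑e) (S.map (origEmb V ℓ)) (liftF ℓ f) u
        = ∑ T ∈ S.powerset, (if e 0 ∈ T ∨ e 1 ∈ T then
            (X : ℝ[X]) ^ ((∑ v ∈ S, f v) - ∑ v ∈ T, f v) * ∏ v ∈ T, (1 - X ^ f v) else 0) := by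
    intro u hu
    rw [prObs, my_powerset_map, Finset.sum_map]
    refine Finset.sum_congr rfl (fun T hT => ?_)
    simp only [Function.Embedding.coeFn_mk]
    have hFS : ∑ v ∈ S.map (origEmb V ℓ), liftF ℓ f v = ∑ v ∈ S, f v := by
      rw [Finset.sum_map]; rfl
    have hFT : ∑ v ∈ T.map (origEmb V ℓ), liftF ℓ f v = ∑ v ∈ T, f v := by
      rw [Finset.sum_map]; rfl
    have hPT : ∏ v ∈ T.map (origEmb V ℓ), ((1 : ℝ[X]) - X ^ liftF ℓ f v)
        = ∏ v ∈ T, ((1 : ℝ[X]) - X ^ f v) := by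
      rw [Finset.prod_map]; rfl
    by_cases hp : e 0 ∈ T ∨ e 1 ∈ T
    · rw [if_pos hp, Set.indicator_of_mem, hFS, hFT, hPT]
      obtain ⟨hh, hpth⟩ := SpoonAux.obs_of_mem G e T hp
      rcases hu with rfl | ⟨j, rfl⟩
      exacts [hh, hpth j]
    · push_neg at hp
      rw [if_neg (by push_neg; exact hp), Set.indicator_of_notMem]
      obtain ⟨hh, hpth⟩ := SpoonAux.obs_of_not_mem G e T hp.1 hp.2
      rcases hu with rfl | ⟨j, rfl⟩
      exacts [hh, hpth j]
  have hsplit : (∑ T ∈ S.powerset, (if e 0 ∈ T ∨ e 1 ∈ T then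
        (X : ℝ[X]) ^ ((∑ v ∈ S, f v) - ∑ v ∈ T, f v) * ∏ v ∈ T, (1 - X ^ f v) else 0))
      = 1 - X ^ (∑ w ∈ A, f w) := by
    set term : Finset V → ℝ[X] :=
      fun T => (X : ℝ[X]) ^ ((∑ v ∈ S, f v) - ∑ v ∈ T, f v) * ∏ v ∈ T, (1 - X ^ f v) with hterm
    have hall : ∑ T ∈ S.powerset, term T = 1 := sum_powerset_one S f
    have hfilter : S.powerset.filter (fun T => ¬(e 0 ∈ T ∨ e 1 ∈ T)) = (S \ A).powerset := by
      ext T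
      simp only [Finset.mem_filter, Finset.mem_powerset, Finset.subset_sdiff,
        Finset.disjoint_left, not_or]
      constructor
      · rintro ⟨hTS, h0, h1⟩
        refine ⟨hTS, fun x hx hxA => ?_⟩
        rcases (hA x).mp hxA with rfl | rfl
        exacts [h0 hx, h1 hx]
      · rintro ⟨hTS, hdisj⟩
        exact ⟨hTS, fun h => hdisj h ((hA _).mpr (Or.inl rfl)),
          fun h => hdisj h ((hA _).mpr (Or.inr rfl))⟩
    have hbad : ∑ T ∈ (S \ A).powerset, term T = X ^ (∑ w ∈ A, f w) := by
      have hstep : ∀ T ∈ (S \ A).powerset,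
          term T = X ^ (∑ w ∈ A, f w) *
            ((X : ℝ[X]) ^ ((∑ v ∈ S \ A, f v) - ∑ v ∈ T, f v) * ∏ v ∈ T, (1 - X ^ f v)) := by
        intro T hT
        have h1 := Finset.sum_sdiff (f := f) hAS
        have h2 : ∑ v ∈ T, f v ≤ ∑ v ∈ S \ A, f v :=
          Finset.sum_le_sum_of_subset (Finset.mem_powerset.mp hT)
        have hexp : (∑ v ∈ S, f v) - ∑ v ∈ T, f v
            = (∑ w ∈ A, f w) + ((∑ v ∈ S \ A, f v) - ∑ v ∈ T, f v) := by omega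
        rw [hterm]
        dsimp only
        rw [hexp, pow_add, mul_assoc]
      rw [Finset.sum_congr rfl hstep, ← Finset.mul_sum, sum_powerset_one (S \ A) f, mul_one]
    have hsum_ite : ∑ T ∈ S.powerset, (if e 0 ∈ T ∨ e 1 ∈ T then term T else 0)
        = ∑ T ∈ S.powerset.filter (fun T => e 0 ∈ T ∨ e 1 ∈ T), term T :=
      (Finset.sum_filter _ _).symm
    have hadd := Finset.sum_filter_add_sum_filter_not S.powerset
      (fun T => e 0 ∈ T ∨ e 1 ∈ T) term
    rw [hsum_ite]
    rw [hfilter, hbad, hall] at hadd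
    exact eq_sub_of_add_eq hadd
  constructor
  · rw [hsum Spoon2Vert.head (Or.inl rfl), hsplit]
  · intro j
    rw [hsum (Spoon2Vert.path j) (Or.inr ⟨j, rfl⟩), hsum Spoon2Vert.head (Or.inl rfl)]
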